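/- Modular upper bounds via supergradients: for a submodular function f on finite V and any X, Y ⊆ V, f(Y) ≤ f(X) − Σ_{j ∈ X\Y} f(j | X\{j}) + Σ_{j ∈ Y\X} f(j | ∅), and also f(Y) ≤ f(X) − Σ_{j ∈ X\Y} f(j | V\{j}) + Σ_{j ∈ Y\X} f(j | X); both bounds are tight when Y = X. -/

import Mathlib

open Finset

def Submodular {V : Type*} [DecidableEq V] (f : Finset V → ℝ) : Prop :=
  ∀ S T : Finset V, f (S ∪ T) + f (S ∩ T) ≤ f S + f T

-- marginal of removing j from bigger set is smaller
lemma erase_marg {V : Type*} [DecidableEq V] {f : Finset V → ℝ} (hsub : Submodular f)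
    {S T : Finset V} {j : V} (hST : S ⊆ T) (hj : j ∈ S) :
    f T - f (T.erase j) ≤ f S - f (S.erase j) := by
  have h := hsub S (T.erase j)
  have hu : S ∪ T.erase j = T := by
    ext x
    simp only [Finset.mem_union, Finset.mem_erase]
    constructor
    · rintro (h | h)
      · exact hST h
      · exact h.2
    · intro hx
      by_cases hxj : x = j
      · left; subst hxj; exact hj
      · right; exact ⟨hxj, hx⟩
  have hi : S ∩ T.erase j = S.erase j := by
    ext x
    simp only [Finset.mem_inter, Finset.mem_erase]
    constructor
    · rintro ⟨h1, h2, _⟩; exact ⟨h2, h1⟩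
    · rintro ⟨h1, h2⟩; exact ⟨h2, h1, hST h2⟩
  rw [hu, hi] at h
  linarith

-- marginal of inserting j into bigger set is smaller
lemma insert_marg {V : Type*} [DecidableEq V] {f : Finset V → ℝ} (hsub : Submodular f)
    {S T : Finset V} {j : V} (hST : S ⊆ T) (hj : j ∉ T) :
    f (insert j T) - f T ≤ f (insert j S) - f S := by
  have h := hsub (insert j S) T
  have hu : insert j S ∪ T = insert j T := by
    rw [Finset.insert_union, Finset.union_eq_right.mpr hST]
  have hi : insert j S ∩ T = S := by
    rw [Finset.insert_inter_of_notMem hj, Finset.inter_eq_left.mpr hST]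
  rw [hu, hi] at h
  linarith

lemma sum_removal {V : Type*} [DecidableEq V] {f : Finset V → ℝ} (hsub : Submodular f)
    {S T : Finset V} (hST : S ⊆ T) :
    ∀ D : Finset V, D ⊆ S →
      ∑ j ∈ D, (f T - f (T.erase j)) ≤ f S - f (S \ D) := by
  intro D
  induction D using Finset.induction_on with
  | empty => intro _; simp
  | insert j D' hjD ih =>
    intro hDS
    have hjS : j ∈ S := hDS (Finset.mem_insert_self _ _)
    have hD'S : D' ⊆ S := fun x hx => hDS (Finset.mem_insert_of_mem hx)
    have hkey : S \ insert j D' = (S \ D').erase j := by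
      ext x
      simp only [Finset.mem_sdiff, Finset.mem_erase, Finset.mem_insert]
      tauto
    have h1 : f T - f (T.erase j) ≤ f (S \ D') - f ((S \ D').erase j) :=
      erase_marg hsub (Finset.sdiff_subset.trans hST)
        (Finset.mem_sdiff.mpr ⟨hjS, hjD⟩)
    rw [Finset.sum_insert hjD, hkey]
    have h2 := ih hD'S
    linarith

lemma sum_insertion {V : Type*} [DecidableEq V] {f : Finset V → ℝ} (hsub : Submodular f)
    {A B : Finset V} (hBA : B ⊆ A) :
    ∀ D : Finset V, Disjoint D A →
      f (A ∪ D) ≤ f A + ∑ j ∈ D, (f (insert j B) - f B) := by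
  intro D
  induction D using Finset.induction_on with
  | empty => intro _; simp
  | insert j D' hjD ih =>
    intro hdisj
    have hjA : j ∉ A := Finset.disjoint_left.mp hdisj (Finset.mem_insert_self _ _)
    have hD' : Disjoint D' A :=
      Finset.disjoint_of_subset_left (Finset.subset_insert _ _) hdisj
    have hkey : A ∪ insert j D' = insert j (A ∪ D') := by
      ext x; simp only [Finset.mem_union, Finset.mem_insert]; tauto
    have hjAD' : j ∉ A ∪ D' := by
      simp only [Finset.mem_union]; push_neg; exact ⟨hjA, hjD⟩
    have h1 : f (insert j (A ∪ D')) - f (A ∪ D') ≤ f (insert j B) - f B :=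
      insert_marg hsub (hBA.trans Finset.subset_union_left) hjAD'
    rw [Finset.sum_insert hjD, hkey]
    have h2 := ih hD'
    linarith

theorem stmt19 {V : Type*} [Fintype V] [DecidableEq V]
    (f : Finset V → ℝ) (hsub : Submodular f) :
    (∀ X Y : Finset V,
      f Y ≤ f X - (∑ j ∈ X \ Y, (f X - f (X.erase j))) + ∑ j ∈ Y \ X, (f {j} - f ∅)) ∧
    (∀ X Y : Finset V,
      f Y ≤ f X - (∑ j ∈ X \ Y, (f Finset.univ - f (Finset.univ.erase j))) +
        ∑ j ∈ Y \ X, (f (insert j X) - f X)) ∧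
    (∀ X : Finset V,
      (f X - (∑ j ∈ X \ X, (f X - f (X.erase j))) + ∑ j ∈ X \ X, (f {j} - f ∅) = f X) ∧
      (f X - (∑ j ∈ X \ X, (f Finset.univ - f (Finset.univ.erase j))) +
        ∑ j ∈ X \ X, (f (insert j X) - f X) = f X)) := by
  refine ⟨?_, ?_, ?_⟩
  · intro X Y
    have h1 : f ((X ∩ Y) ∪ (Y \ X)) ≤ f (X ∩ Y) + ∑ j ∈ Y \ X, (f (insert j ∅) - f ∅) :=
      sum_insertion hsub (Finset.empty_subset _) _ (by
        rw [Finset.disjoint_left]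
        intro x hx hx'
        exact (Finset.mem_sdiff.mp hx).2 (Finset.mem_inter.mp hx').1)
    have he : (X ∩ Y) ∪ (Y \ X) = Y := by
      ext x; simp only [Finset.mem_union, Finset.mem_inter, Finset.mem_sdiff]; tauto
    have h2 : ∑ j ∈ X \ Y, (f X - f (X.erase j)) ≤ f X - f (X \ (X \ Y)) :=
      sum_removal hsub (le_refl X) _ Finset.sdiff_subset
    have he2 : X \ (X \ Y) = X ∩ Y := Finset.sdiff_sdiff_self_left X Y
    have hins : ∀ j : V, f (insert j (∅ : Finset V)) = f {j} := fun j => rfl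
    simp only [hins] at h1
    rw [he] at h1
    rw [he2] at h2
    linarith
  · intro X Y
    have h1 : f (X ∪ (Y \ X)) ≤ f X + ∑ j ∈ Y \ X, (f (insert j X) - f X) :=
      sum_insertion hsub (le_refl X) _ Finset.sdiff_disjoint
    have he : X ∪ (Y \ X) = X ∪ Y := Finset.union_sdiff_self_eq_union
    have h2 : ∑ j ∈ X \ Y, (f Finset.univ - f (Finset.univ.erase j))
        ≤ f (X ∪ Y) - f ((X ∪ Y) \ (X \ Y)) :=
      sum_removal hsub (Finset.subset_univ _) _
        (Finset.sdiff_subset.trans Finset.subset_union_left)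
    have he2 : (X ∪ Y) \ (X \ Y) = Y := by
      ext x; simp only [Finset.mem_union, Finset.mem_sdiff]; tauto
    rw [he] at h1
    rw [he2] at h2
    linarith
  · intro X
    simp
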